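/- arXiv:1210.0688 — 2 statements merged into one kernel-verified Lean document; each statement's English description precedes it below -/
import Mathlib

section
/- Let a < 0 and ε ∈ ℝ. Denote by p(a+iε) and p(a) the square roots with nonnegative imaginary part of a+iε and a respectively. Then |p(a+iε) - p(a)| ≤ |ε| / (2 sqrt(-a)). -/
theorem stmt_5 (a : ℝ) (ha : a < 0) (ε : ℝ) (p q : ℂ)
    (hp : p ^ 2 = (a : ℂ) + Complex.I * ε) (hpI : 0 ≤ p.im)
    (hq : q ^ 2 = (a : ℂ)) (hqI : 0 ≤ q.im) :
    ‖p - q‖ ≤ |ε| / (2 * Real.sqrt (-a)) := by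
  set s := Real.sqrt (-a) with hs
  have hs2 : s ^ 2 = -a := Real.sq_sqrt (by linarith)
  have hspos : 0 < s := Real.sqrt_pos.mpr (by linarith)
  -- q.im = s
  have hqre : q.re ^ 2 - q.im ^ 2 = a := by
    have := congrArg Complex.re hq
    simpa [pow_two, Complex.mul_re] using this
  have hqim0 : q.re * q.im = 0 := by
    have := congrArg Complex.im hq
    have h2 : q.re * q.im + q.im * q.re = 0 := by
      simpa [pow_two, Complex.mul_im] using this
    linarith
  have hqre0 : q.re = 0 := by
    rcases mul_eq_zero.mp hqim0 with h | h
    · exact h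
    · exfalso
      rw [h] at hqre
      nlinarith [sq_nonneg q.re]
  have hqim : q.im = s := by
    nlinarith [sq_nonneg (q.im - s), sq_nonneg (q.im + s)]
  -- p.im ≥ s
  have hpre : p.re ^ 2 - p.im ^ 2 = a := by
    have := congrArg Complex.re hp
    simpa [pow_two, Complex.mul_re, Complex.add_re, Complex.ofReal_re] using this
  have hpim : s ≤ p.im := by
    nlinarith [sq_nonneg p.re, sq_nonneg (p.im - s), sq_nonneg (p.im + s)]
  -- product identity
  have hprod : (p - q) * (p + q) = Complex.I * ε := by
    have : (p - q) * (p + q) = p ^ 2 - q ^ 2 := by ring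
    rw [this, hp, hq]; ring
  have habs : ‖p - q‖ * ‖p + q‖ = |ε| := by
    have := congrArg (fun z : ℂ => ‖z‖) hprod
    simpa [norm_mul, Complex.norm_real, Complex.norm_I] using this
  have hpq : 2 * s ≤ ‖p + q‖ := by
    calc 2 * s ≤ (p + q).im := by simp [Complex.add_im, hqim]; linarith
    _ ≤ |(p + q).im| := le_abs_self _
    _ ≤ ‖p + q‖ := Complex.abs_im_le_norm _
  have h2s : 0 < 2 * s := by linarith
  rw [le_div_iff₀ h2s]
  calc ‖p - q‖ * (2 * s) ≤ ‖p - q‖ * ‖p + q‖ :=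
        mul_le_mul_of_nonneg_left hpq (norm_nonneg _)
  _ = |ε| := habs
end

section
/- Let a > 0 and ε > 0. Let p(a ± iε) denote the square root of a ± iε with nonnegative imaginary part, and p(a) = sqrt(a) > 0. Then |p(a + iε) - p(a)| ≤ sqrt(ε) and |p(a - iε) + p(a)| ≤ sqrt(ε). -/
lemma key_aux (ε : ℝ) (hε : 0 < ε) (u v : ℂ)
    (hprod : ‖u‖ * ‖v‖ = ε)
    (hv : ε ≤ ‖v‖ ^ 2) : ‖u‖ ≤ Real.sqrt ε := by
  have h1 : Real.sqrt ε ≤ ‖v‖ := by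
    have := Real.sqrt_le_sqrt hv
    rwa [Real.sqrt_sq (norm_nonneg _)] at this
  have h2 : ‖u‖ * Real.sqrt ε ≤ ε := by
    calc ‖u‖ * Real.sqrt ε ≤ ‖u‖ * ‖v‖ :=
      mul_le_mul_of_nonneg_left h1 (norm_nonneg _)
    _ = ε := hprod
  have h3 : ‖u‖ ≤ ε / Real.sqrt ε :=
    (le_div_iff₀ (Real.sqrt_pos.mpr hε)).mpr h2
  rwa [Real.div_sqrt] at h3

theorem stmt_6 (a ε : ℝ) (ha : 0 < a) (hε : 0 < ε) (pplus pminus : ℂ)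
    (hpp : pplus ^ 2 = (a : ℂ) + Complex.I * ε) (hppI : 0 ≤ pplus.im)
    (hpm : pminus ^ 2 = (a : ℂ) - Complex.I * ε) (hpmI : 0 ≤ pminus.im) :
    ‖pplus - Real.sqrt a‖ ≤ Real.sqrt ε ∧
    ‖pminus + Real.sqrt a‖ ≤ Real.sqrt ε := by
  set s := Real.sqrt a with hsdef
  have hs : 0 < s := Real.sqrt_pos.mpr ha
  have hs2 : (s:ℂ)^2 = (a:ℂ) := by
    norm_cast
    exact Real.sq_sqrt ha.le
  -- normSq facts
  have hnp : ε ≤ ‖pplus‖ ^ 2 := by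
    have h := Complex.abs_im_le_norm ((a:ℂ) + Complex.I * ε)
    simp at h
    calc ε ≤ |ε| := le_abs_self ε
    _ ≤ ‖(a:ℂ) + Complex.I * ε‖ := h
    _ = ‖pplus‖ ^ 2 := by rw [← hpp, norm_pow]
  have hnm : ε ≤ ‖pminus‖ ^ 2 := by
    have h := Complex.abs_im_le_norm ((a:ℂ) - Complex.I * ε)
    simp at h
    calc ε ≤ |ε| := le_abs_self ε
    _ ≤ ‖(a:ℂ) - Complex.I * ε‖ := h
    _ = ‖pminus‖ ^ 2 := by rw [← hpm, norm_pow]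
  -- sign of real parts
  have himp : pplus.re * pplus.im + pplus.im * pplus.re = ε := by
    have : (pplus ^ 2).im = ε := by rw [hpp]; simp
    simpa [pow_two, Complex.mul_im] using this
  have hrep : 0 ≤ pplus.re := by
    by_contra h
    push_neg at h
    nlinarith [mul_nonpos_of_nonpos_of_nonneg h.le hppI]
  have himm : pminus.re * pminus.im + pminus.im * pminus.re = -ε := by
    have : (pminus ^ 2).im = -ε := by rw [hpm]; simp
    simpa [pow_two, Complex.mul_im] using this
  have hrem : pminus.re ≤ 0 := by
    by_contra h
    push_neg at h
    nlinarith [mul_nonneg h.le hpmI]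
  constructor
  · apply key_aux ε hε
    · rw [← norm_mul]
      have : (pplus - (s:ℂ)) * (pplus + (s:ℂ)) = Complex.I * ε := by
        have h : (pplus - (s:ℂ)) * (pplus + (s:ℂ)) = pplus ^ 2 - (s:ℂ)^2 := by ring
        rw [h, hpp, hs2]; ring
      rw [this]
      simp [abs_of_pos hε]
    · rw [Complex.sq_norm, Complex.normSq_apply]
      rw [Complex.sq_norm, Complex.normSq_apply] at hnp
      simp only [Complex.add_re, Complex.add_im, Complex.ofReal_re, Complex.ofReal_im]
      nlinarith
  · apply key_aux ε hε
    · rw [← norm_mul]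
      have : (pminus + (s:ℂ)) * (pminus - (s:ℂ)) = -(Complex.I * ε) := by
        have h : (pminus + (s:ℂ)) * (pminus - (s:ℂ)) = pminus ^ 2 - (s:ℂ)^2 := by ring
        rw [h, hpm, hs2]; ring
      rw [this]
      simp [abs_of_pos hε]
    · rw [Complex.sq_norm, Complex.normSq_apply]
      rw [Complex.sq_norm, Complex.normSq_apply] at hnm
      simp only [Complex.sub_re, Complex.sub_im, Complex.ofReal_re, Complex.ofReal_im]
      nlinarith
end
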